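/- arXiv:2008.00374 — 2 statements merged into one kernel-verified Lean document; each statement's English description precedes it below -/
import Mathlib

section
/- Fix an order of precedence ▷ over the categories and let ≻^▷ be the patient preference profile in which each patient ranks categories according to ▷ (with only eligible categories above ∅). Then the sequential reserve matching φ_▷ equals the outcome of the deferred acceptance algorithm applied to the preference profile ≻^▷. -/
open Finset

section ReserveSystem

variable {I C : Type*} [Fintype I] [DecidableEq I] [Fintype C] [DecidableEq C]

/-- Patient `i` is eligible for category `c` (i.e. `i π_c ∅`). Priorities are encoded by
injective score functions `pr c : Option I → ℕ`, where `none` stands for `∅` and a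
higher score means a higher priority. -/
def Elig (pr : C → Option I → ℕ) (c : C) (i : I) : Prop :=
  pr c none < pr c (some i)

instance (pr : C → Option I → ℕ) (c : C) (i : I) : Decidable (Elig pr c i) := by
  unfold Elig; infer_instance

/-- A matching assigns each patient a category or `none`, respecting capacities `r`. -/
def IsMatching (r : C → ℕ) (μ : I → Option C) : Prop :=
  ∀ c : C, (univ.filter (fun i => μ i = some c)).card ≤ r c

/-- Patients selected when category `c` with `k` units is processed on the pool `avail`:
the `k` highest-`π_c`-priority eligible patients (all eligible ones if fewer than `k`). -/
def seqTop (pr : C → Option I → ℕ) (c : C) (k : ℕ) (avail : Finset I) : Finset I :=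
  (avail.filter (fun i => Elig pr c i)).filter (fun i =>
    ((avail.filter (fun i' => Elig pr c i')).filter
        (fun j => pr c (some i) < pr c (some j))).card < k)

/-- The sequential reserve matching induced by processing the given list of categories in
order, over the pool `avail` of patients. -/
def seqMatch (pr : C → Option I → ℕ) (r : C → ℕ) : List C → Finset I → I → Option C
  | [], _, _ => none
  | c :: L, avail, i =>
      if i ∈ seqTop pr c (r c) avail then some c
      else seqMatch pr r L (avail \ seqTop pr c (r c) avail) i

/-- Patient `i`'s proposal given the set `R` of categories that have rejected her so far:
her most preferred (w.r.t. her preference scores `up i`) eligible category outside `R`. -/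
noncomputable def propose (pr : C → Option I → ℕ) (up : I → C → ℕ) (i : I)
    (R : Finset C) : Option C :=
  if h : (univ.filter (fun c => Elig pr c i ∧ c ∉ R)).Nonempty then
    some (Classical.choose
      (Finset.exists_max_image (univ.filter (fun c => Elig pr c i ∧ c ∉ R)) (up i) h))
  else none

/-- One round of the patient-proposing deferred acceptance algorithm, acting on the
profile of rejection sets: every patient proposes to her best remaining eligible
category, and each category `c` tentatively keeps its `r c` highest-`π_c`-priority
applicants, permanently rejecting the rest. -/
noncomputable def daStep (pr : C → Option I → ℕ) (r : C → ℕ) (up : I → C → ℕ)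
    (R : I → Finset C) : I → Finset C :=
  fun i =>
    match propose pr up i (R i) with
    | none => R i
    | some c =>
        if ((univ.filter (fun j => propose pr up j (R j) = some c ∧
              pr c (some i) < pr c (some j))).card < r c) then R i
        else insert c (R i)

/-- The outcome of the patient-proposing deferred acceptance algorithm: rounds are
iterated until no rejection occurs (a fixed point is reached after at most
`|I| ⬝ |C|` rounds), and each patient is matched to her final tentative assignment. -/
noncomputable def daOutcome (pr : C → Option I → ℕ) (r : C → ℕ) (up : I → C → ℕ) :
    I → Option C :=
  fun i =>
    propose pr up i
      ((daStep pr r up)^[Fintype.card I * Fintype.card C + 1] (fun _ => ∅) i)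

-- ==================== auxiliary material ====================

lemma count_lt_of_lt {A : Finset I} {f : I → ℕ} {a b : I} (hb : b ∈ A) (h : f a < f b) :
    (A.filter fun j => f b < f j).card < (A.filter fun j => f a < f j).card := by
  apply Finset.card_lt_card
  rw [Finset.ssubset_def]
  constructor
  · exact Finset.monotone_filter_right A (fun j _ hj => h.trans hj)
  · intro hsub
    have := hsub (mem_filter.mpr ⟨hb, h⟩)
    rw [mem_filter] at this
    exact lt_irrefl _ this.2

lemma cnt_injOn (A : Finset I) (f : I → ℕ) (hf : Function.Injective f) :
    Set.InjOn (fun j => (A.filter fun j' => f j < f j').card) A := by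
  intro a ha b hb hab
  by_contra hne
  dsimp only at hab
  rcases (hf.ne hne).lt_or_gt with h | h
  · have := count_lt_of_lt hb h; omega
  · have := count_lt_of_lt ha h; omega

lemma rank_image (A : Finset I) (f : I → ℕ) (hf : Function.Injective f) :
    A.image (fun j => (A.filter fun j' => f j < f j').card) = Finset.range A.card := by
  apply Finset.eq_of_subset_of_card_le
  · intro x hx
    rw [Finset.mem_image] at hx
    obtain ⟨j, hj, rfl⟩ := hx
    rw [Finset.mem_range]
    have hsub : A.filter (fun j' => f j < f j') ⊆ A.erase j := by
      intro y hy; rw [mem_filter] at hy; rw [Finset.mem_erase]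
      exact ⟨fun h => lt_irrefl _ (h ▸ hy.2), hy.1⟩
    calc (A.filter fun j' => f j < f j').card ≤ (A.erase j).card := card_le_card hsub
      _ < A.card := Finset.card_erase_lt_of_mem hj
  · rw [Finset.card_range, Finset.card_image_of_injOn (cnt_injOn A f hf)]

lemma top_count (A : Finset I) (f : I → ℕ) (hf : Function.Injective f) (k : ℕ) :
    (A.filter fun j => (A.filter fun j' => f j < f j').card < k).card = min k A.card := by
  have h2 : (A.filter fun j => (A.filter fun j' => f j < f j').card < k).card
      = ((A.filter fun j => (A.filter fun j' => f j < f j').card < k).image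
          (fun j => (A.filter fun j' => f j < f j').card)).card :=
    (Finset.card_image_of_injOn ((cnt_injOn A f hf).mono
      (Finset.coe_subset.mpr (Finset.filter_subset _ _)))).symm
  have h1 : ((A.filter fun j => (A.filter fun j' => f j < f j').card < k).image
          (fun j => (A.filter fun j' => f j < f j').card))
      = (Finset.range A.card).filter (· < k) := by
    ext x
    constructor
    · rw [Finset.mem_image]
      rintro ⟨j, hj, rfl⟩
      rw [mem_filter] at hj
      refine mem_filter.mpr ⟨?_, hj.2⟩
      rw [← rank_image A f hf]
      exact Finset.mem_image_of_mem _ hj.1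
    · intro hx
      rw [mem_filter] at hx
      obtain ⟨hx1, hx2⟩ := hx
      rw [← rank_image A f hf, Finset.mem_image] at hx1
      obtain ⟨j, hj, rfl⟩ := hx1
      exact Finset.mem_image_of_mem _ (mem_filter.mpr ⟨hj, hx2⟩)
  rw [h2, h1]
  have h3 : (Finset.range A.card).filter (· < k) = Finset.range (min k A.card) := by
    ext x
    simp only [Finset.mem_filter, Finset.mem_range]
    omega
  rw [h3, Finset.card_range]

lemma seqTop_subset (pr : C → Option I → ℕ) (c : C) (k : ℕ) (avail : Finset I) :
    seqTop pr c k avail ⊆ avail :=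
  (Finset.filter_subset _ _).trans (Finset.filter_subset _ _)

lemma seqTop_above (pr : C → Option I → ℕ) (hpr : ∀ c, Function.Injective (pr c))
    (avail : Finset I) (c : C) (k : ℕ) (i : I) (hi : i ∈ avail) (he : Elig pr c i)
    (hni : i ∉ seqTop pr c k avail) :
    k ≤ ((seqTop pr c k avail).filter fun j => pr c (some i) < pr c (some j)).card := by
  have hfinj : Function.Injective (fun j : I => pr c (some j)) :=
    fun a b hab => Option.some_injective I ((hpr c) hab)
  set P := avail.filter (fun j => Elig pr c j) with hP
  have hiP : i ∈ P := mem_filter.mpr ⟨hi, he⟩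
  have hcnt : k ≤ (P.filter fun j => pr c (some i) < pr c (some j)).card := by
    by_contra h
    push_neg at h
    exact hni (mem_filter.mpr ⟨hiP, h⟩)
  set A := P.filter (fun j => pr c (some i) < pr c (some j)) with hA
  have hsub : A.filter (fun j =>
        (A.filter fun j' => pr c (some j) < pr c (some j')).card < k) ⊆
      (seqTop pr c k avail).filter fun j => pr c (some i) < pr c (some j) := by
    intro j hj
    rw [mem_filter] at hj
    obtain ⟨hjA, hjcnt⟩ := hj
    have hjA' := hjA
    rw [hA, mem_filter] at hjA'
    obtain ⟨hjP, hjab⟩ := hjA'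
    have hPA : P.filter (fun j' => pr c (some j) < pr c (some j'))
        = A.filter (fun j' => pr c (some j) < pr c (some j')) := by
      ext x
      simp only [hA, mem_filter]
      constructor
      · rintro ⟨hxP, hx⟩
        exact ⟨⟨hxP, hjab.trans hx⟩, hx⟩
      · rintro ⟨⟨hxP, -⟩, hx⟩
        exact ⟨hxP, hx⟩
    rw [mem_filter]
    refine ⟨?_, hjab⟩
    show j ∈ seqTop pr c k avail
    rw [seqTop]
    refine mem_filter.mpr ⟨hjP, ?_⟩
    show (P.filter (fun j' => pr c (some j) < pr c (some j'))).card < k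
    rw [hPA]
    exact hjcnt
  have hc1 := Finset.card_le_card hsub
  have htc := top_count A (fun j : I => pr c (some j)) hfinj k
  rw [min_eq_left hcnt] at htc
  omega

def availAt (pr : C → Option I → ℕ) (r : C → ℕ) : List C → Finset I → C → Finset I
  | [], avail, _ => avail
  | c' :: L', avail, c =>
      if c = c' then avail
      else availAt pr r L' (avail \ seqTop pr c' (r c') avail) c

lemma availAt_subset (pr : C → Option I → ℕ) (r : C → ℕ) :
    ∀ (L' : List C) (avail : Finset I) (c : C), availAt pr r L' avail c ⊆ avail
  | [], _, _ => subset_rfl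
  | c' :: L', avail, c => by
      rw [availAt]
      split_ifs with h
      · exact subset_rfl
      · exact (availAt_subset pr r L' _ c).trans (Finset.sdiff_subset)

lemma seqMatch_some (pr : C → Option I → ℕ) (r : C → ℕ) :
    ∀ (L' : List C) (avail : Finset I) (i : I) (c : C),
      seqMatch pr r L' avail i = some c → c ∈ L' ∧ Elig pr c i
  | [], avail, i, c => by intro h; exact absurd h (by simp [seqMatch])
  | c' :: L', avail, i, c => by
      rw [seqMatch]
      split_ifs with h
      · intro hc
        injection hc with hc
        subst hc
        refine ⟨List.mem_cons_self, ?_⟩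
        rw [seqTop, mem_filter, mem_filter] at h
        exact h.1.2
      · intro hc
        obtain ⟨h1, h2⟩ := seqMatch_some pr r L' _ i c hc
        exact ⟨List.mem_cons_of_mem _ h1, h2⟩

lemma seqMatch_eq_iff (pr : C → Option I → ℕ) (r : C → ℕ) :
    ∀ (L' : List C), L'.Nodup → ∀ (avail : Finset I) (c : C), c ∈ L' → ∀ i : I,
      (seqMatch pr r L' avail i = some c ↔ i ∈ seqTop pr c (r c) (availAt pr r L' avail c))
  | [], _, avail, c, hc => absurd hc List.not_mem_nil
  | c' :: L', hnd, avail, c, hc => by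
      intro i
      rw [List.nodup_cons] at hnd
      rw [seqMatch, availAt]
      by_cases hcc : c = c'
      · subst hcc
        rw [if_pos rfl]
        split_ifs with h
        · simp [h]
        · simp only [h, iff_false]
          intro hm
          exact hnd.1 ((seqMatch_some pr r L' _ i c hm).1)
      · rw [if_neg hcc]
        split_ifs with h
        · constructor
          · intro hc'
            injection hc' with hc'
            exact absurd hc'.symm hcc
          · intro hmem
            have : i ∈ avail \ seqTop pr c' (r c') avail :=
              availAt_subset pr r L' _ c (seqTop_subset pr c (r c) _ hmem)
            rw [Finset.mem_sdiff] at this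
            exact absurd h this.2
        · exact seqMatch_eq_iff pr r L' hnd.2 _ c (by
            rcases List.mem_cons.mp hc with h' | h'
            · exact absurd h' hcc
            · exact h') i

lemma mem_availAt (pr : C → Option I → ℕ) (r : C → ℕ) :
    ∀ (L' : List C), L'.Nodup → ∀ (avail : Finset I) (c : C), c ∈ L' → ∀ i : I,
      (i ∈ availAt pr r L' avail c ↔ i ∈ avail ∧
        ∀ d, seqMatch pr r L' avail i = some d → L'.idxOf c ≤ L'.idxOf d)
  | [], _, avail, c, hc => absurd hc List.not_mem_nil
  | c' :: L', hnd, avail, c, hc => by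
      intro i
      rw [List.nodup_cons] at hnd
      rw [availAt, seqMatch]
      by_cases hcc : c = c'
      · subst hcc
        rw [if_pos rfl]
        constructor
        · intro h
          refine ⟨h, fun d _ => ?_⟩
          rw [List.idxOf_cons_self]
          exact Nat.zero_le _
        · exact fun h => h.1
      · rw [if_neg hcc]
        have hcL : c ∈ L' := by
          rcases List.mem_cons.mp hc with h' | h'
          · exact absurd h' hcc
          · exact h'
        have hc'c : c' ≠ c := fun h => hcc h.symm
        by_cases hT : i ∈ seqTop pr c' (r c') avail
        · rw [if_pos hT]
          constructor
          · intro h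
            have : i ∈ avail \ seqTop pr c' (r c') avail := availAt_subset pr r L' _ c h
            rw [Finset.mem_sdiff] at this
            exact absurd hT this.2
          · rintro ⟨-, h2⟩
            have := h2 c' rfl
            rw [List.idxOf_cons_self, List.idxOf_cons_ne _ hc'c] at this
            exact absurd this (Nat.not_succ_le_zero _)
        · rw [if_neg hT]
          rw [mem_availAt pr r L' hnd.2 _ c hcL i]
          constructor
          · rintro ⟨h1, h2⟩
            rw [Finset.mem_sdiff] at h1
            refine ⟨h1.1, fun d hd => ?_⟩
            have hdL : d ∈ L' := (seqMatch_some pr r L' _ i d hd).1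
            have hc'd : c' ≠ d := fun h => hnd.1 (h ▸ hdL)
            rw [List.idxOf_cons_ne _ hc'c, List.idxOf_cons_ne _ hc'd]
            exact Nat.succ_le_succ (h2 d hd)
          · rintro ⟨h1, h2⟩
            refine ⟨Finset.mem_sdiff.mpr ⟨h1, hT⟩, fun d hd => ?_⟩
            have hdL : d ∈ L' := (seqMatch_some pr r L' _ i d hd).1
            have hc'd : c' ≠ d := fun h => hnd.1 (h ▸ hdL)
            have := h2 d hd
            rw [List.idxOf_cons_ne _ hc'c, List.idxOf_cons_ne _ hc'd] at this
            exact Nat.le_of_succ_le_succ this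


lemma propose_eq_some_iff {pr : C → Option I → ℕ} {up : I → C → ℕ} {i : I}
    (hui : Function.Injective (up i)) {R : Finset C} {c : C} :
    propose pr up i R = some c ↔
      Elig pr c i ∧ c ∉ R ∧ ∀ c', Elig pr c' i → c' ∉ R → up i c' ≤ up i c := by
  unfold propose
  split_ifs with h
  · obtain ⟨hmem, hmax⟩ := Classical.choose_spec (Finset.exists_max_image _ (up i) h)
    rw [mem_filter] at hmem
    constructor
    · intro hc
      injection hc with hc
      subst hc
      exact ⟨hmem.2.1, hmem.2.2, fun c' h1 h2 =>
        hmax c' (mem_filter.mpr ⟨mem_univ _, h1, h2⟩)⟩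
    · rintro ⟨h1, h2, h3⟩
      have hle := hmax c (mem_filter.mpr ⟨mem_univ _, h1, h2⟩)
      have hge := h3 _ hmem.2.1 hmem.2.2
      rw [hui (le_antisymm hge hle)]
  · constructor
    · intro h'
      exact absurd h' (by simp)
    · rintro ⟨h1, h2, -⟩
      exact absurd ⟨c, mem_filter.mpr ⟨mem_univ _, h1, h2⟩⟩ h

lemma propose_eq_none_iff {pr : C → Option I → ℕ} {up : I → C → ℕ} {i : I} {R : Finset C} :
    propose pr up i R = none ↔ ∀ c, Elig pr c i → c ∈ R := by
  unfold propose
  split_ifs with h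
  · simp only [reduceCtorEq, false_iff]
    intro hall
    obtain ⟨c, hc⟩ := h
    rw [mem_filter] at hc
    exact hc.2.2 (hall c hc.2.1)
  · simp only [true_iff]
    intro c hc
    by_contra hcR
    exact h ⟨c, mem_filter.mpr ⟨mem_univ _, hc, hcR⟩⟩

lemma subset_daStep (pr : C → Option I → ℕ) (r : C → ℕ) (up : I → C → ℕ)
    (R : I → Finset C) (i : I) : R i ⊆ daStep pr r up R i := by
  simp only [daStep]
  rcases hp : propose pr up i (R i) with _ | c
  · exact subset_rfl
  · dsimp only
    split_ifs
    · exact subset_rfl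
    · exact Finset.subset_insert _ _

lemma iterate_daStep_fixed (pr : C → Option I → ℕ) (r : C → ℕ) (up : I → C → ℕ) :
    daStep pr r up ((daStep pr r up)^[Fintype.card I * Fintype.card C + 1]
        (fun _ => (∅ : Finset C))) =
      (daStep pr r up)^[Fintype.card I * Fintype.card C + 1] (fun _ => ∅) := by
  set f := daStep pr r up with hf
  set x : I → Finset C := fun _ => ∅ with hx
  set N := Fintype.card I * Fintype.card C + 1 with hN
  have hmono : ∀ (R : I → Finset C) (i : I), R i ⊆ f R i :=
    fun R i => subset_daStep pr r up R i
  have key : ∀ k : ℕ, (∃ j, j ≤ k ∧ f (f^[j] x) = f^[j] x) ∨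
      k ≤ ∑ i : I, ((f^[k] x) i).card := by
    intro k
    induction k with
    | zero => exact Or.inr (Nat.zero_le _)
    | succ k ih =>
      rcases ih with ⟨j, hj, hfix⟩ | hm
      · exact Or.inl ⟨j, hj.trans (Nat.le_succ k), hfix⟩
      · by_cases hfk : f (f^[k] x) = f^[k] x
        · exact Or.inl ⟨k, Nat.le_succ k, hfk⟩
        · right
          have hlt : ∑ i : I, ((f^[k] x) i).card < ∑ i : I, ((f^[k+1] x) i).card := by
            rw [Function.iterate_succ_apply']
            apply Finset.sum_lt_sum
            · intro i _
              exact Finset.card_le_card (hmono _ i)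
            · have hex : ∃ i, (f^[k] x) i ≠ f (f^[k] x) i := by
                by_contra hno
                push_neg at hno
                exact hfk (funext fun i => (hno i).symm)
              obtain ⟨i, hi⟩ := hex
              exact ⟨i, Finset.mem_univ i,
                Finset.card_lt_card (ssubset_of_subset_of_ne (hmono _ i) hi)⟩
          omega
  rcases key N with ⟨j, hj, hfix⟩ | hm
  · have heq : f^[N] x = f^[j] x := by
      conv_lhs => rw [show N = (N - j) + j by omega]
      rw [Function.iterate_add_apply]
      exact Function.iterate_fixed hfix _
    rw [heq]
    exact hfix
  · exfalso
    have hb : ∑ i : I, ((f^[N] x) i).card ≤ Fintype.card I * Fintype.card C := by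
      calc ∑ i : I, ((f^[N] x) i).card ≤ ∑ _i : I, Fintype.card C :=
            Finset.sum_le_sum (fun i _ => Finset.card_le_univ _)
        _ = Fintype.card I * Fintype.card C := by
            rw [Finset.sum_const, Finset.card_univ, smul_eq_mul]
    omega

lemma up_le_up {L : List C} (hall : ∀ c : C, c ∈ L) {c d : C} :
    L.length - L.idxOf c ≤ L.length - L.idxOf d ↔ L.idxOf d ≤ L.idxOf c := by
  have hc := List.idxOf_lt_length_iff.mpr (hall c)
  have hd := List.idxOf_lt_length_iff.mpr (hall d)
  omega

lemma up_inj {L : List C} (hnd : L.Nodup) (hall : ∀ c : C, c ∈ L) :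
    Function.Injective (fun c : C => L.length - L.idxOf c) := by
  intro c d h
  have hc := List.idxOf_lt_length_iff.mpr (hall c)
  have hd := List.idxOf_lt_length_iff.mpr (hall d)
  dsimp only at h
  exact (List.idxOf_inj (hall c)).mp (by omega)

def Rstar (pr : C → Option I → ℕ) (r : C → ℕ) (L : List C) (i : I) : Finset C :=
  univ.filter (fun c => Elig pr c i ∧
    ∀ d, seqMatch pr r L univ i = some d → L.idxOf c < L.idxOf d)

lemma proposer_avail {pr : C → Option I → ℕ} {r : C → ℕ} {L : List C}
    (hnd : L.Nodup) (hall : ∀ c : C, c ∈ L) {R : I → Finset C}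
    (hR : ∀ i, R i ⊆ Rstar pr r L i) {j : I} {c : C}
    (hj : propose pr (fun _ c => L.length - L.idxOf c) j (R j) = some c) :
    j ∈ availAt pr r L univ c := by
  rw [mem_availAt pr r L hnd univ c (hall c) j]
  refine ⟨mem_univ j, fun d hd => ?_⟩
  by_contra hlt
  push_neg at hlt
  obtain ⟨h1, h2, h3⟩ := (propose_eq_some_iff (up_inj hnd hall)).mp hj
  have hde : Elig pr d j := (seqMatch_some pr r L univ j d hd).2
  have hdR : d ∉ R j := by
    intro hmem
    have hh := hR j hmem
    rw [Rstar, mem_filter] at hh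
    exact lt_irrefl _ (hh.2.2 d hd)
  have hle := h3 d hde hdR
  rw [up_le_up hall] at hle
  omega


lemma inv_step {pr : C → Option I → ℕ} (hpr : ∀ c, Function.Injective (pr c))
    {r : C → ℕ} {L : List C} (hnd : L.Nodup) (hall : ∀ c : C, c ∈ L)
    {R : I → Finset C} (hR : ∀ i, R i ⊆ Rstar pr r L i) (i : I) :
    daStep pr r (fun _ c => L.length - L.idxOf c) R i ⊆ Rstar pr r L i := by
  simp only [daStep]
  rcases hp : propose pr (fun _ c => L.length - L.idxOf c) i (R i) with _ | c
  · exact hR i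
  · dsimp only
    split_ifs with hcond
    · exact hR i
    · intro x hx
      rcases Finset.mem_insert.mp hx with rfl | hx
      · -- show x ∈ Rstar pr r L i  (x = c)
        obtain ⟨he, hcRi, hmax⟩ := (propose_eq_some_iff (up_inj hnd hall)).mp hp
        rw [Rstar, mem_filter]
        refine ⟨mem_univ _, he, fun d hd => ?_⟩
        rcases Nat.lt_trichotomy (L.idxOf x) (L.idxOf d) with h | h | h
        · exact h
        · exfalso
          obtain rfl : x = d := (List.idxOf_inj (hall x)).mp h
          have hiT : i ∈ seqTop pr x (r x) (availAt pr r L univ x) :=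
            (seqMatch_eq_iff pr r L hnd univ x (hall x) i).mp hd
          have hcnt : (((availAt pr r L univ x).filter (fun j => Elig pr x j)).filter
              (fun j => pr x (some i) < pr x (some j))).card < r x := by
            rw [seqTop, mem_filter] at hiT
            exact hiT.2
          have hsub : univ.filter (fun j => propose pr (fun _ c => L.length - L.idxOf c)
                j (R j) = some x ∧ pr x (some i) < pr x (some j)) ⊆
              ((availAt pr r L univ x).filter (fun j => Elig pr x j)).filter
                (fun j => pr x (some i) < pr x (some j)) := by
            intro j hj
            rw [mem_filter] at hj
            obtain ⟨-, hpj, hab⟩ := hj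
            have hje := ((propose_eq_some_iff (up_inj hnd hall)).mp hpj).1
            exact mem_filter.mpr ⟨mem_filter.mpr ⟨proposer_avail hnd hall hR hpj, hje⟩, hab⟩
          have := Finset.card_le_card hsub
          omega
        · exfalso
          have hde : Elig pr d i := (seqMatch_some pr r L univ i d hd).2
          have hdR : d ∉ R i := by
            intro hm
            have hh := hR i hm
            rw [Rstar, mem_filter] at hh
            exact lt_irrefl _ (hh.2.2 d hd)
          have hle := hmax d hde hdR
          rw [up_le_up hall] at hle
          omega
      · exact hR i hx

lemma fix_agree {pr : C → Option I → ℕ} (hpr : ∀ c, Function.Injective (pr c))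
    {r : C → ℕ} {L : List C} (hnd : L.Nodup) (hall : ∀ c : C, c ∈ L)
    {R : I → Finset C}
    (hfix : daStep pr r (fun _ c => L.length - L.idxOf c) R = R)
    (hR : ∀ i, R i ⊆ Rstar pr r L i) :
    ∀ (n : ℕ) (c : C) (i : I), L.idxOf c < n → (c ∈ R i ↔ c ∈ Rstar pr r L i) := by
  intro n
  induction n using Nat.strong_induction_on with
  | _ n IH =>
    intro c i hcn
    constructor
    · exact fun h => hR i h
    · intro hc
      by_contra hcR
      rw [Rstar, mem_filter] at hc
      obtain ⟨-, hce, hclt⟩ := hc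
      have hiA : i ∈ availAt pr r L univ c := by
        rw [mem_availAt pr r L hnd univ c (hall c) i]
        exact ⟨mem_univ i, fun d hd => (hclt d hd).le⟩
      have hiT : i ∉ seqTop pr c (r c) (availAt pr r L univ c) := by
        intro hT
        have := (seqMatch_eq_iff pr r L hnd univ c (hall c) i).mpr hT
        exact lt_irrefl _ (hclt c this)
      have key : ∀ j : I, Elig pr c j → c ∉ R j →
          (∀ c', Elig pr c' j → L.idxOf c' < L.idxOf c → c' ∈ Rstar pr r L j) →
          propose pr (fun _ c => L.length - L.idxOf c) j (R j) = some c := by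
        intro j he hcRj hst
        rw [propose_eq_some_iff (up_inj hnd hall)]
        refine ⟨he, hcRj, fun c' he' hR' => ?_⟩
        show L.length - L.idxOf c' ≤ L.length - L.idxOf c
        rw [up_le_up hall]
        by_contra h
        push_neg at h
        have hc'R : c' ∈ R j :=
          (IH (L.idxOf c' + 1) (by omega) c' j (by omega)).mpr (hst c' he' h)
        exact hR' hc'R
      have hW := seqTop_above pr hpr (availAt pr r L univ c) c (r c) i hiA hce hiT
      have hsub : (seqTop pr c (r c) (availAt pr r L univ c)).filter
            (fun j => pr c (some i) < pr c (some j)) ⊆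
          univ.filter (fun j => propose pr (fun _ c => L.length - L.idxOf c)
            j (R j) = some c ∧ pr c (some i) < pr c (some j)) := by
        intro j hj
        rw [mem_filter] at hj
        obtain ⟨hjT, hjab⟩ := hj
        have hμj : seqMatch pr r L univ j = some c :=
          (seqMatch_eq_iff pr r L hnd univ c (hall c) j).mpr hjT
        have hej : Elig pr c j := by
          rw [seqTop, mem_filter, mem_filter] at hjT
          exact hjT.1.2
        have hcRj : c ∉ R j := by
          intro hmem
          have hh := hR j hmem
          rw [Rstar, mem_filter] at hh
          exact lt_irrefl _ (hh.2.2 c hμj)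
        refine mem_filter.mpr ⟨mem_univ j, key j hej hcRj (fun c' he' hlt' => ?_), hjab⟩
        rw [Rstar, mem_filter]
        refine ⟨mem_univ c', he', fun d hd => ?_⟩
        rw [hμj] at hd
        injection hd with hd
        subst hd
        exact hlt'
      have hcard := le_trans hW (Finset.card_le_card hsub)
      have hiprop : propose pr (fun _ c => L.length - L.idxOf c) i (R i) = some c :=
        key i hce hcR (fun c' he' hlt' => by
          rw [Rstar, mem_filter]
          exact ⟨mem_univ c', he', fun d hd => lt_trans hlt' (hclt d hd)⟩)
      have hmem : c ∈ daStep pr r (fun _ c => L.length - L.idxOf c) R i := by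
        simp only [daStep, hiprop]
        rw [if_neg (by omega)]
        exact Finset.mem_insert_self _ _
      rw [hfix] at hmem
      exact hcR hmem

/-- Proposition 1: the sequential reserve matching induced by a precedence order equals
the deferred acceptance outcome for the preference profile in which every patient ranks
the categories according to the precedence order. -/
theorem sequential_is_da_induced
    (pr : C → Option I → ℕ) (hpr : ∀ c, Function.Injective (pr c))
    (r : C → ℕ) (L : List C) (hnd : L.Nodup) (hall : ∀ c : C, c ∈ L) :
    seqMatch pr r L univ = daOutcome pr r (fun _ c => L.length - L.idxOf c) := by
  funext i
  have hsub : ∀ (k : ℕ) (j : I),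
      ((daStep pr r (fun _ c => L.length - L.idxOf c))^[k] (fun _ => ∅)) j
        ⊆ Rstar pr r L j := by
    intro k
    induction k with
    | zero => intro j; simp
    | succ k ih =>
      intro j
      rw [Function.iterate_succ_apply']
      exact inv_step hpr hnd hall ih j
  have hfix := iterate_daStep_fixed pr r (fun _ c => L.length - L.idxOf c)
  set RN := (daStep pr r (fun _ c => L.length - L.idxOf c))^[Fintype.card I *
    Fintype.card C + 1] (fun _ => (∅ : Finset C)) with hRN
  have hag : ∀ (j : I), RN j = Rstar pr r L j := by
    intro j
    apply Finset.ext
    intro c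
    exact fix_agree hpr hnd hall hfix (hsub _) L.length c j
      (List.idxOf_lt_length_iff.mpr (hall c))
  show seqMatch pr r L univ i
      = propose pr (fun _ c => L.length - L.idxOf c) i (RN i)
  rw [hag i]
  rcases hm : seqMatch pr r L univ i with _ | d
  · symm
    rw [propose_eq_none_iff]
    intro c hc
    rw [Rstar, mem_filter]
    refine ⟨mem_univ c, hc, fun d hd => ?_⟩
    rw [hm] at hd
    exact absurd hd (by simp)
  · symm
    rw [propose_eq_some_iff (up_inj hnd hall)]
    have hde : Elig pr d i := (seqMatch_some pr r L univ i d hm).2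
    refine ⟨hde, ?_, ?_⟩
    · intro hmem
      rw [Rstar, mem_filter] at hmem
      exact lt_irrefl _ (hmem.2.2 d hm)
    · intro c' he' hR'
      show L.length - L.idxOf c' ≤ L.length - L.idxOf d
      rw [up_le_up hall]
      by_contra h
      push_neg at h
      apply hR'
      rw [Rstar, mem_filter]
      refine ⟨mem_univ c', he', fun e hee => ?_⟩
      rw [hm] at hee
      injection hee with hee
      subst hee
      exact h

end ReserveSystem
end

section
/- Let ▷' be obtained from the order of precedence ▷ by swapping a category c with its immediate predecessor c' (so that c is processed earlier under ▷'). Then the maximum equilibrium cutoff of c under φ_{▷'} is weakly higher (with respect to π_c) than under φ_▷: f̄^{φ_{▷'}}_c weakly-π_c f̄^{φ_▷}_c. In particular, processing a category earlier weakly increases its selectivity. -/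
set_option linter.unusedSectionVars false


open Finset

section ReserveSystem

variable {I C : Type*} [Fintype I] [DecidableEq I] [Fintype C] [DecidableEq C]

/-- `f` is the maximum cutoff vector `f̄^μ` of matching `μ`:
`f̄^μ_c = min_{π_c} μ⁻¹(c)` when category `c` is full, and `∅` otherwise. -/
def IsMaxCutoff (pr : C → Option I → ℕ) (r : C → ℕ) (μ : I → Option C)
    (f : C → Option I) : Prop :=
  ∀ c, ((univ.filter (fun i => μ i = some c)).card = r c ∧
          ∃ m, f c = some m ∧ μ m = some c ∧
            ∀ j, μ j = some c → pr c (some m) ≤ pr c (some j))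
    ∨ ((univ.filter (fun i => μ i = some c)).card ≠ r c ∧ f c = none)

/-- The pool of patients remaining after processing a list of categories. -/
def availAfter (pr : C → Option I → ℕ) (r : C → ℕ) : List C → Finset I → Finset I
  | [], a => a
  | c :: L, a => availAfter pr r L (a \ seqTop pr c (r c) a)

lemma availAfter_subset (pr : C → Option I → ℕ) (r : C → ℕ) :
    ∀ (L : List C) (a : Finset I), availAfter pr r L a ⊆ a := by
  intro L
  induction L with
  | nil => intro a; exact subset_rfl
  | cons d L ih => intro a; exact (ih _).trans sdiff_subset

lemma availAfter_append (pr : C → Option I → ℕ) (r : C → ℕ) :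
    ∀ (L M : List C) (a : Finset I),
      availAfter pr r (L ++ M) a = availAfter pr r M (availAfter pr r L a) := by
  intro L
  induction L with
  | nil => intro M a; rfl
  | cons d L ih => intro M a; simp only [List.cons_append, availAfter, List.append_eq, ih]

lemma seqMatch_ne_of_not_mem (pr : C → Option I → ℕ) (r : C → ℕ) (c : C) :
    ∀ (L : List C), c ∉ L → ∀ (a : Finset I) (i : I), seqMatch pr r L a i ≠ some c := by
  intro L
  induction L with
  | nil => intro _ a i h; simp [seqMatch] at h
  | cons d L ih =>
      intro hc a i h
      simp only [seqMatch] at h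
      split at h
      · exact hc (by simp [Option.some.inj h])
      · exact ih (fun hm => hc (List.mem_cons_of_mem _ hm)) _ _ h

lemma seqMatch_preimage (pr : C → Option I → ℕ) (r : C → ℕ) (c : C) (L2 : List C)
    (hc2 : c ∉ L2) :
    ∀ (L1 : List C), c ∉ L1 → ∀ (a : Finset I),
      univ.filter (fun i => seqMatch pr r (L1 ++ c :: L2) a i = some c)
        = seqTop pr c (r c) (availAfter pr r L1 a) := by
  intro L1
  induction L1 with
  | nil =>
      intro _ a
      ext i
      simp only [mem_filter, mem_univ, true_and, List.nil_append, seqMatch, availAfter]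
      by_cases hi : i ∈ seqTop pr c (r c) a
      · simp [hi]
      · simp [hi, seqMatch_ne_of_not_mem pr r c L2 hc2]
  | cons d L1 ih =>
      intro hc a
      have hcd : c ≠ d := fun h => hc (h ▸ (List.mem_cons_self (a := d) (l := L1)))
      have hc1 : c ∉ L1 := fun h => hc (List.mem_cons_of_mem _ h)
      ext i
      simp only [mem_filter, mem_univ, true_and, List.cons_append, seqMatch, availAfter]
      by_cases hi : i ∈ seqTop pr d (r d) a
      · have hnotR : i ∉ seqTop pr c (r c)
            (availAfter pr r L1 (a \ seqTop pr d (r d) a)) := fun hmem =>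
          (mem_sdiff.mp (availAfter_subset pr r L1 _
            (seqTop_subset pr c (r c) _ hmem))).2 hi
        simp only [if_pos hi, hnotR, iff_false]
        intro h
        exact hcd (Option.some.inj h).symm
      · rw [if_neg hi]
        have := Finset.ext_iff.mp (ih hc1 (a \ seqTop pr d (r d) a)) i
        simpa using this

lemma card_seqTop (pr : C → Option I → ℕ) (c : C) (hpr : Function.Injective (pr c))
    (k : ℕ) (avail : Finset I) :
    (seqTop pr c k avail).card
      = min k (avail.filter (fun i => Elig pr c i)).card := by
  classical
  set E := avail.filter (fun i => Elig pr c i) with hE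
  set g : I → ℕ := fun i => (E.filter (fun j => pr c (some i) < pr c (some j))).card
    with hg
  have hST : seqTop pr c k avail = E.filter (fun i => g i < k) := rfl
  -- g is injective on E
  have key : ∀ i ∈ E, ∀ i' ∈ E, pr c (some i) < pr c (some i') → g i' < g i := by
    intro i hi i' hi' hlt
    have hsub : insert i' (E.filter (fun j => pr c (some i') < pr c (some j)))
        ⊆ E.filter (fun j => pr c (some i) < pr c (some j)) := by
      intro j hj
      rcases mem_insert.mp hj with h | h
      · subst h; exact mem_filter.mpr ⟨hi', hlt⟩
      · rcases mem_filter.mp h with ⟨hjE, hjgt⟩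
        exact mem_filter.mpr ⟨hjE, hlt.trans hjgt⟩
    have hni : i' ∉ E.filter (fun j => pr c (some i') < pr c (some j)) := by
      simp [mem_filter]
    calc g i' < g i' + 1 := Nat.lt_succ_self _
      _ = (insert i' (E.filter (fun j => pr c (some i') < pr c (some j)))).card := by
          rw [card_insert_of_notMem hni]
      _ ≤ g i := card_le_card hsub
  have hg_inj : Set.InjOn g E := by
    intro i hi i' hi' h
    by_contra hne'
    have hprne : pr c (some i) ≠ pr c (some i') := fun he =>
      hne' (Option.some.inj (hpr he))
    rcases lt_or_gt_of_ne hprne with hlt | hlt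
    · exact absurd h (Nat.ne_of_gt (key i hi i' hi' hlt))
    · exact absurd h (Nat.ne_of_lt (key i' hi' i hi hlt))
  have hg_lt : ∀ i ∈ E, g i < E.card := by
    intro i hi
    have hss : E.filter (fun j => pr c (some i) < pr c (some j)) ⊂ E := by
      refine (ssubset_iff_of_subset (filter_subset _ _)).mpr ⟨i, hi, ?_⟩
      simp [mem_filter]
    exact card_lt_card hss
  have himg : E.image g = Finset.range E.card := by
    apply Finset.eq_of_subset_of_card_le
    · intro n hn
      rcases mem_image.mp hn with ⟨i, hi, rfl⟩
      exact mem_range.mpr (hg_lt i hi)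
    · rw [card_range, card_image_of_injOn hg_inj]
  have h1 : (E.filter (fun i => g i < k)).image g
      = (E.image g).filter (fun n => n < k) := by
    ext n
    simp only [mem_image, mem_filter]
    constructor
    · rintro ⟨i, hi, rfl⟩
      exact ⟨⟨i, hi.1, rfl⟩, hi.2⟩
    · rintro ⟨⟨i, hiE, rfl⟩, hk⟩
      exact ⟨i, ⟨hiE, hk⟩, rfl⟩
  have h2 : (E.filter (fun i => g i < k)).card
      = ((E.image g).filter (fun n => n < k)).card := by
    rw [← h1, card_image_of_injOn (hg_inj.mono (by
      intro x hx
      exact filter_subset _ _ hx))]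
  have h3 : (Finset.range E.card).filter (fun n => n < k)
      = Finset.range (min E.card k) := by
    ext n
    simp [lt_min_iff]
  rw [hST, h2, himg, h3, card_range, Nat.min_comm]

/-- Proposition 2: swapping category `c` with its immediate predecessor `c'` (so that `c`
is processed earlier) weakly raises the maximum equilibrium cutoff of `c`. -/
theorem earlier_processing_raises_cutoff
    (pr : C → Option I → ℕ) (hpr : ∀ c, Function.Injective (pr c))
    (r : C → ℕ) (c c' : C) (hne : c' ≠ c) (L1 L2 : List C)
    (hnd : (L1 ++ c' :: c :: L2).Nodup)
    (hall : ∀ x : C, x ∈ L1 ++ c' :: c :: L2)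
    (fbar fbar' : C → Option I)
    (hfbar : IsMaxCutoff pr r (seqMatch pr r (L1 ++ c' :: c :: L2) univ) fbar)
    (hfbar' : IsMaxCutoff pr r (seqMatch pr r (L1 ++ c :: c' :: L2) univ) fbar') :
    pr c (fbar c) ≤ pr c (fbar' c) := by
  classical
  obtain ⟨hnd1, hnd2, hdisj⟩ := List.nodup_append'.mp hnd
  have hcL1 : c ∉ L1 := fun h => hdisj h (by simp)
  have hcL2 : c ∉ L2 := (List.nodup_cons.mp (List.nodup_cons.mp hnd2).2).1
  have hcc' : c ∉ c' :: L2 := by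
    simp only [List.mem_cons, not_or]
    exact ⟨fun h => hne h.symm, hcL2⟩
  have hcL1c' : c ∉ L1 ++ [c'] := by
    simp only [List.mem_append, List.mem_singleton, not_or]
    exact ⟨hcL1, fun h => hne h.symm⟩
  set A := availAfter pr r L1 (univ : Finset I) with hA
  set S' := seqTop pr c' (r c') A with hS'
  set X := seqTop pr c (r c) (A \ S') with hX
  set Y := seqTop pr c (r c) A with hY
  set E := A.filter (fun i => Elig pr c i) with hE
  have hAA : availAfter pr r (L1 ++ [c']) (univ : Finset I) = A \ S' := by
    rw [availAfter_append]; rfl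
  have hpre : univ.filter
      (fun i => seqMatch pr r (L1 ++ c' :: c :: L2) univ i = some c) = X := by
    have hlist : L1 ++ c' :: c :: L2 = (L1 ++ [c']) ++ c :: L2 := by simp
    rw [hlist, seqMatch_preimage pr r c L2 hcL2 (L1 ++ [c']) hcL1c' univ, hAA]
  have hpre' : univ.filter
      (fun i => seqMatch pr r (L1 ++ c :: c' :: L2) univ i = some c) = Y := by
    rw [seqMatch_preimage pr r c (c' :: L2) hcc' L1 hcL1 univ]
  rcases hfbar' c with ⟨hcard', m', hf'm, hμ'm, hmin'⟩ | ⟨hcne', hf'none⟩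
  · -- c is full under ▷'
    have hm'Y : m' ∈ Y := by
      rw [← hpre']
      simp [hμ'm]
    have hm'Y2 : m' ∈ E ∧
        (E.filter (fun j => pr c (some m') < pr c (some j))).card < r c := by
      have := hm'Y
      rw [hY] at this
      simp only [seqTop, mem_filter, ← hE] at this
      exact this
    have helig : Elig pr c m' := (mem_filter.mp hm'Y2.1).2
    rcases hfbar c with ⟨hcardX, m, hfm, hμm, hmin⟩ | ⟨_, hfnone⟩
    · rw [hfm, hf'm]
      by_contra hgt
      push_neg at hgt
      have hXsub : X ⊆ E.filter (fun j => pr c (some m') < pr c (some j)) := by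
        intro x hx
        have hxμ : seqMatch pr r (L1 ++ c' :: c :: L2) univ x = some c := by
          rw [← hpre] at hx
          exact (mem_filter.mp hx).2
        have hge := hmin x hxμ
        have hx2 : (x ∈ A \ S' ∧ Elig pr c x) ∧ True := by
          rw [hX] at hx
          simp only [seqTop, mem_filter] at hx
          exact ⟨hx.1, trivial⟩
        refine mem_filter.mpr ⟨mem_filter.mpr ⟨?_, hx2.1.2⟩, lt_of_lt_of_le hgt hge⟩
        exact (mem_sdiff.mp hx2.1.1).1
      have hcardX' : X.card = r c := by rw [← hpre]; exact hcardX
      have := card_le_card hXsub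
      omega
    · rw [hfnone, hf'm]
      exact le_of_lt helig
  · -- c is not full under ▷'
    rw [hpre'] at hcne'
    have hYcard : Y.card = min (r c) E.card := card_seqTop pr c (hpr c) (r c) A
    have hElt : E.card < r c := by omega
    have hXsubE : X ⊆ E := by
      intro x hx
      rw [hX] at hx
      simp only [seqTop, mem_filter] at hx
      exact mem_filter.mpr ⟨(mem_sdiff.mp hx.1.1).1, hx.1.2⟩
    have hXlt : X.card < r c := lt_of_le_of_lt (card_le_card hXsubE) hElt
    rcases hfbar c with ⟨hcardX, _⟩ | ⟨_, hfnone⟩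
    · rw [hpre] at hcardX
      omega
    · rw [hfnone, hf'none]

end ReserveSystem
end
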